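/- Fix $a > 2^n$ and $u \in L^\infty_c(\mathbb{R}^n)$ non-negative. For $k \in \mathbb{Z}$ let $\{Q_j^k\}_j$ be the Calderón–Zygmund cubes of $u$ at height $a^k$, and define the bad part $b_k(x) = \sum_j (u(x) - u_{Q_j^k})\chi_{Q_j^k}(x)$. Then for all $k$ and almost every $x$, $|b_k(x) - b_{k+1}(x)| \leq (1+a)2^n a^k$. -/

import Mathlib

open MeasureTheory Set

noncomputable section

/-- The standard dyadic cube `2^k([0,1)^n + m)` in `ℝⁿ`. -/
def stdCube (n : ℕ) (k : ℤ) (m : Fin n → ℤ) : Set (Fin n → ℝ) :=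
  {x | ∀ i, (2 : ℝ) ^ k * m i ≤ x i ∧ x i < (2 : ℝ) ^ k * (m i + 1)}

/-- The average `⨍_Q u = |Q|⁻¹ ∫_Q u`. -/
def cubeAvg (n : ℕ) (u : (Fin n → ℝ) → ℝ) (Q : Set (Fin n → ℝ)) : ℝ :=
  (volume Q).toReal⁻¹ * ∫ x in Q, u x

/-- `Q` is a Calderón–Zygmund cube of `u` at height `lam`: a maximal dyadic cube with
`⨍_Q u > lam`. -/
def IsCZCube (n : ℕ) (u : (Fin n → ℝ) → ℝ) (lam : ℝ) (k : ℤ) (m : Fin n → ℤ) : Prop :=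
  lam < cubeAvg n u (stdCube n k m) ∧
    ∀ (k' : ℤ) (m' : Fin n → ℤ), stdCube n k m ⊆ stdCube n k' m' →
      stdCube n k m ≠ stdCube n k' m' → cubeAvg n u (stdCube n k' m') ≤ lam

/-- The bad part `b_λ(x) = ∑_j (u(x) - u_{Q_j}) χ_{Q_j}(x)` of the Calderón–Zygmund
decomposition of `u` at height `lam`. -/
def badPart (n : ℕ) (u : (Fin n → ℝ) → ℝ) (lam : ℝ) (x : Fin n → ℝ) : ℝ :=
  ∑' q : {q : ℤ × (Fin n → ℤ) // IsCZCube n u lam q.1 q.2},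
    (stdCube n q.1.1 q.1.2).indicator
      (fun y => u y - cubeAvg n u (stdCube n q.1.1 q.1.2)) x


namespace CZaux

variable {n : ℕ}

def idx (n : ℕ) (k : ℤ) (x : Fin n → ℝ) : Fin n → ℤ := fun i => ⌊x i / 2 ^ k⌋

lemma two_zpow_pos (k : ℤ) : (0:ℝ) < 2 ^ k := zpow_pos (by norm_num) k

lemma mem_stdCube_iff {k : ℤ} {m : Fin n → ℤ} {x : Fin n → ℝ} :
    x ∈ stdCube n k m ↔ m = idx n k x := by
  have h2 := two_zpow_pos k
  constructor
  · intro hx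
    funext i
    obtain ⟨h1, h2'⟩ := hx i
    rw [idx, eq_comm, Int.floor_eq_iff]
    constructor
    · rw [le_div_iff₀ h2]; linarith [h1]
    · rw [div_lt_iff₀ h2]; linarith [h2']
  · rintro rfl i
    constructor
    · rw [mul_comm, ← le_div_iff₀ h2]; exact Int.floor_le _
    · rw [mul_comm, ← div_lt_iff₀ h2]; push_cast; exact Int.lt_floor_add_one _
lemma mem_stdCube_idx (k : ℤ) (x : Fin n → ℝ) : x ∈ stdCube n k (idx n k x) :=
  mem_stdCube_iff.2 rfl

lemma floor_div_pow {d : ℕ} {m : ℤ} {t : ℝ} (h1 : (m:ℝ) ≤ t) (h2 : t < m + 1) :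
    ⌊t / 2 ^ d⌋ = ⌊(m : ℝ) / 2 ^ d⌋ := by
  have hd : (0:ℝ) < 2 ^ d := by positivity
  set q := ⌊(m:ℝ) / 2 ^ d⌋ with hq
  have hql : (q:ℝ) ≤ (m:ℝ) / 2 ^ d := Int.floor_le _
  have hqu : (m:ℝ) / 2 ^ d < q + 1 := Int.lt_floor_add_one _
  have hmq : (m:ℝ) < (q + 1) * 2 ^ d := by rw [← div_lt_iff₀ hd]; exact hqu
  have hmq' : (m:ℤ) < (q + 1) * 2 ^ d := by exact_mod_cast (by push_cast; linarith : (m:ℝ) < ((q:ℝ) + 1) * (2:ℝ) ^ d)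
  have hmq2 : ((m:ℝ)) + 1 ≤ ((q:ℝ) + 1) * 2 ^ d := by
    have h3 : (m:ℤ) + 1 ≤ (q + 1) * 2 ^ d := hmq'
    exact_mod_cast h3
  rw [Int.floor_eq_iff]
  constructor
  · calc ((q:ℤ):ℝ) ≤ (m:ℝ) / 2 ^ d := hql
      _ ≤ t / 2 ^ d := by gcongr
  · rw [div_lt_iff₀ hd]
    push_cast
    linarith

lemma stdCube_subset {k k' : ℤ} (hk : k ≤ k') {m m' : Fin n → ℤ} {x : Fin n → ℝ}
    (hx : x ∈ stdCube n k m) (hx' : x ∈ stdCube n k' m') :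
    stdCube n k m ⊆ stdCube n k' m' := by
  intro y hy
  rw [mem_stdCube_iff] at hx hx' ⊢
  subst hx hx'
  funext i
  set d : ℕ := (k' - k).toNat with hd
  have hkk : (2:ℝ) ^ k' = 2 ^ k * 2 ^ d := by
    rw [← zpow_natCast (2:ℝ) d, ← zpow_add₀ (by norm_num : (2:ℝ) ≠ 0)]
    congr 1
    rw [hd, Int.toNat_of_nonneg (by omega)]
    ring
  have key : ∀ z : Fin n → ℝ, z ∈ stdCube n k (idx n k x) →
      ⌊z i / 2 ^ k'⌋ = ⌊((idx n k x i : ℝ)) / 2 ^ d⌋ := by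
    intro z hz
    obtain ⟨h1, h2⟩ := hz i
    have h2p := two_zpow_pos k
    have e : z i / 2 ^ k' = (z i / 2 ^ k) / 2 ^ d := by
      rw [hkk, div_div]
    rw [e]
    exact floor_div_pow (by rw [le_div_iff₀ h2p]; linarith)
      (by rw [div_lt_iff₀ h2p]; push_cast; linarith)
  show idx n k' x i = idx n k' y i
  rw [idx, idx, key x (mem_stdCube_idx k x), key y hy]

lemma stdCube_eq_pi (k : ℤ) (m : Fin n → ℤ) :
    stdCube n k m = Set.pi univ (fun i => Ico ((2:ℝ) ^ k * m i) ((2:ℝ) ^ k * (m i + 1))) := by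
  ext x; simp [stdCube, Set.mem_pi, Set.mem_Ico]

lemma measurableSet_stdCube (k : ℤ) (m : Fin n → ℤ) : MeasurableSet (stdCube n k m) := by
  rw [stdCube_eq_pi]
  exact MeasurableSet.univ_pi fun i => measurableSet_Ico

lemma volume_stdCube (k : ℤ) (m : Fin n → ℤ) :
    volume (stdCube n k m) = ENNReal.ofReal ((2:ℝ) ^ k) ^ n := by
  rw [stdCube_eq_pi, Real.volume_pi_Ico]
  have : ∀ i : Fin n, ENNReal.ofReal ((2:ℝ) ^ k * (m i + 1) - 2 ^ k * m i)
      = ENNReal.ofReal ((2:ℝ) ^ k) := by intro i; ring_nf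
  rw [Finset.prod_congr rfl (fun i _ => this i), Finset.prod_const, Finset.card_univ, Fintype.card_fin]

lemma volume_stdCube_toReal (k : ℤ) (m : Fin n → ℤ) :
    (volume (stdCube n k m)).toReal = ((2:ℝ) ^ k) ^ n := by
  rw [volume_stdCube, ENNReal.toReal_pow, ENNReal.toReal_ofReal (two_zpow_pos k).le]

lemma volume_stdCube_pos (k : ℤ) (m : Fin n → ℤ) : 0 < volume (stdCube n k m) := by
  rw [volume_stdCube]
  exact ENNReal.pow_pos (ENNReal.ofReal_pos.2 (two_zpow_pos k)) n

lemma volume_stdCube_ne_top (k : ℤ) (m : Fin n → ℤ) : volume (stdCube n k m) ≠ ⊤ := by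
  rw [volume_stdCube]
  exact (ENNReal.pow_ne_top ENNReal.ofReal_ne_top)

lemma stdCube_inj (hn : n ≠ 0) {k k' : ℤ} {m m' : Fin n → ℤ}
    (h : stdCube n k m = stdCube n k' m') : k = k' ∧ m = m' := by
  have hk : k = k' := by
    have hv : (((2:ℝ) ^ k) ^ n) = ((2:ℝ) ^ k') ^ n := by
      rw [← volume_stdCube_toReal k m, ← volume_stdCube_toReal k' m', h]
    have hv' : (2:ℝ) ^ (k * n) = 2 ^ (k' * n) := by
      rw [zpow_mul, zpow_mul, zpow_natCast, zpow_natCast]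
      exact hv
    have : k * (n:ℤ) = k' * n := zpow_right_injective₀ (by norm_num) (by norm_num) hv'
    have hn' : (n:ℤ) ≠ 0 := by exact_mod_cast hn
    exact mul_right_cancel₀ hn' this
  subst hk
  constructor
  · rfl
  · set x : Fin n → ℝ := fun i => (2:ℝ) ^ k * m i with hx
    have hxm : x ∈ stdCube n k m := by
      intro i
      refine ⟨le_refl _, ?_⟩
      show (2:ℝ) ^ k * (m i) < 2 ^ k * ((m i) + 1)
      nlinarith [two_zpow_pos k]
    have hxm' : x ∈ stdCube n k m' := h ▸ hxm
    rw [mem_stdCube_iff] at hxm hxm'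
    rw [hxm, hxm']

variable {n : ℕ} {u : (Fin n → ℝ) → ℝ}

lemma stdCube_nonempty (k : ℤ) (m : Fin n → ℤ) : (stdCube n k m).Nonempty := by
  refine ⟨fun i => (2:ℝ) ^ k * m i, fun i => ⟨le_refl _, ?_⟩⟩
  show (2:ℝ) ^ k * (m i) < 2 ^ k * ((m i) + 1)
  nlinarith [two_zpow_pos k]

lemma cubeAvg_nonneg (hu0 : 0 ≤ u) (k : ℤ) (m : Fin n → ℤ) :
    0 ≤ cubeAvg n u (stdCube n k m) :=
  mul_nonneg (inv_nonneg.2 ENNReal.toReal_nonneg)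
    (setIntegral_nonneg (measurableSet_stdCube k m) fun x _ => hu0 x)

lemma cubeAvg_le_parent (hint : Integrable u) (hu0 : 0 ≤ u) {k : ℤ} {m m' : Fin n → ℤ}
    (hsub : stdCube n k m ⊆ stdCube n (k + 1) m') :
    cubeAvg n u (stdCube n k m) ≤ 2 ^ n * cubeAvg n u (stdCube n (k + 1) m') := by
  have hI : ∫ x in stdCube n k m, u x ≤ ∫ x in stdCube n (k + 1) m', u x :=
    setIntegral_mono_set hint.integrableOn
      (Filter.Eventually.of_forall fun x => hu0 x) (HasSubset.Subset.eventuallyLE hsub)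
  have hVQ : (0:ℝ) < ((2:ℝ) ^ k) ^ n := by positivity
  rw [cubeAvg, cubeAvg, volume_stdCube_toReal, volume_stdCube_toReal]
  have hP : ((2:ℝ) ^ (k + 1)) ^ n = 2 ^ n * ((2:ℝ) ^ k) ^ n := by
    rw [zpow_add_one₀ (by norm_num : (2:ℝ) ≠ 0), mul_comm ((2:ℝ)^k) 2, mul_pow]
  rw [hP]
  have he : (2:ℝ) ^ n * ((2 ^ n * ((2:ℝ) ^ k) ^ n)⁻¹ * ∫ x in stdCube n (k+1) m', u x)
      = (((2:ℝ) ^ k) ^ n)⁻¹ * ∫ x in stdCube n (k+1) m', u x := by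
    have h2 : (0:ℝ) < 2 ^ n := by positivity
    field_simp
  rw [he]
  exact mul_le_mul_of_nonneg_left hI (inv_nonneg.2 hVQ.le)

lemma cubeAvg_le_total (hint : Integrable u) (hu0 : 0 ≤ u) (k : ℤ) (m : Fin n → ℤ) :
    cubeAvg n u (stdCube n k m) ≤ (((2:ℝ) ^ k) ^ n)⁻¹ * ∫ x, u x := by
  rw [cubeAvg, volume_stdCube_toReal]
  exact mul_le_mul_of_nonneg_left
    (setIntegral_le_integral hint (Filter.Eventually.of_forall fun x => hu0 x))
    (inv_nonneg.2 (by positivity))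

lemma cz_avg_le (hn : n ≠ 0) (hint : Integrable u) (hu0 : 0 ≤ u) {lam : ℝ} {k : ℤ}
    {m : Fin n → ℤ} (h : IsCZCube n u lam k m) :
    cubeAvg n u (stdCube n k m) ≤ 2 ^ n * lam := by
  obtain ⟨x, hx⟩ := stdCube_nonempty (n := n) k m
  have hxp := mem_stdCube_idx (k + 1) x
  have hsub : stdCube n k m ⊆ stdCube n (k + 1) (idx n (k + 1) x) :=
    stdCube_subset (by omega) hx hxp
  have hne : stdCube n k m ≠ stdCube n (k + 1) (idx n (k + 1) x) := by
    intro hEq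
    exact absurd (stdCube_inj hn hEq).1 (by omega)
  calc cubeAvg n u (stdCube n k m) ≤ 2 ^ n * cubeAvg n u (stdCube n (k+1) (idx n (k+1) x)) :=
        cubeAvg_le_parent hint hu0 hsub
    _ ≤ 2 ^ n * lam := by
        have := h.2 (k + 1) (idx n (k + 1) x) hsub hne
        nlinarith [pow_pos (by norm_num : (0:ℝ) < 2) n]

lemma cz_disjoint (hn : n ≠ 0) {lam : ℝ} {k k' : ℤ} {m : Fin n → ℤ} {m' : Fin n → ℤ}
    (h : IsCZCube n u lam k m) (h' : IsCZCube n u lam k' m')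
    (hne : stdCube n k m ≠ stdCube n k' m') :
    Disjoint (stdCube n k m) (stdCube n k' m') := by
  by_contra hd
  obtain ⟨x, hx, hx'⟩ := Set.not_disjoint_iff.1 hd
  rcases le_total k k' with hkk | hkk
  · exact absurd (h.2 k' m' (stdCube_subset hkk hx hx') hne) (not_le.2 h'.1)
  · exact absurd (h'.2 k m (stdCube_subset hkk hx' hx) (Ne.symm hne)) (not_le.2 h.1)

lemma cz_exists (hn : n ≠ 0) (hint : Integrable u) (hu0 : 0 ≤ u) {lam : ℝ} (hlam : 0 < lam)
    {k0 : ℤ} {m0 : Fin n → ℤ} {x : Fin n → ℝ} (hx : x ∈ stdCube n k0 m0)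
    (havg : lam < cubeAvg n u (stdCube n k0 m0)) :
    ∃ k m, IsCZCube n u lam k m ∧ x ∈ stdCube n k m := by
  set P : ℤ → Prop := fun z => lam < cubeAvg n u (stdCube n z (idx n z x)) with hPdef
  have hP0 : P k0 := by
    show lam < cubeAvg n u (stdCube n k0 (idx n k0 x))
    rw [← mem_stdCube_iff.1 hx]
    exact havg
  obtain ⟨N, hN⟩ := pow_unbounded_of_one_lt ((∫ x, u x) / lam) (by norm_num : (1:ℝ) < 2)
  have hbdd : ∀ z, P z → z ≤ (N : ℤ) := by
    intro z hz
    by_contra hgt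
    push_neg at hgt
    have hz0 : (0:ℤ) ≤ z := by omega
    have h2N : (2:ℝ) ^ (N:ℤ) ≤ 2 ^ z := by
      apply zpow_le_zpow_right₀ (by norm_num : (1:ℝ) ≤ 2) hgt.le
    have h1z : (1:ℝ) ≤ 2 ^ z := by simpa using zpow_le_zpow_right₀ (by norm_num : (1:ℝ) ≤ 2) hz0
    have hself : (2:ℝ) ^ z ≤ ((2:ℝ) ^ z) ^ n := le_self_pow₀ h1z hn
    have hA : (0:ℝ) ≤ ∫ x, u x := integral_nonneg hu0
    have hBpos : (0:ℝ) < ((2:ℝ) ^ z) ^ n := by positivity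
    have hNN : (2:ℝ) ^ N = (2:ℝ) ^ (N:ℤ) := by rw [zpow_natCast]
    have hchain : (((2:ℝ) ^ z) ^ n)⁻¹ * ∫ x, u x < lam := by
      rw [inv_mul_eq_div, div_lt_iff₀ hBpos]
      rw [div_lt_iff₀ hlam] at hN
      nlinarith
    have hlt : cubeAvg n u (stdCube n z (idx n z x)) < lam :=
      lt_of_le_of_lt (cubeAvg_le_total hint hu0 z _) hchain
    exact absurd hz (not_lt.2 hlt.le)
  obtain ⟨K, hK, hmax⟩ := Int.exists_greatest_of_bdd ⟨(N:ℤ), hbdd⟩ ⟨k0, hP0⟩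
  refine ⟨K, idx n K x, ⟨hK, ?_⟩, mem_stdCube_idx K x⟩
  intro k' m' hsub hne
  have hxk' : x ∈ stdCube n k' m' := hsub (mem_stdCube_idx K x)
  have hKk' : K ≤ k' := by
    by_contra hlt
    push_neg at hlt
    exact hne (Subset.antisymm hsub (stdCube_subset hlt.le hxk' (mem_stdCube_idx K x)))
  by_contra hgt
  push_neg at hgt
  have hPk' : P k' := by
    show lam < cubeAvg n u (stdCube n k' (idx n k' x))
    rw [← mem_stdCube_iff.1 hxk']
    exact hgt
  have hk'K : k' ≤ K := hmax k' hPk'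
  have hkne : k' ≠ K := by
    rintro rfl
    exact hne (by rw [mem_stdCube_iff.1 hxk'])
  omega


variable {n : ℕ} {u : (Fin n → ℝ) → ℝ}

def closedCube (n : ℕ) (k : ℤ) (m : Fin n → ℤ) : Set (Fin n → ℝ) :=
  Set.pi univ (fun i => Icc ((2:ℝ) ^ k * m i) ((2:ℝ) ^ k * (m i + 1)))

lemma stdCube_ae_eq_closedCube (k : ℤ) (m : Fin n → ℤ) :
    stdCube n k m =ᵐ[volume] closedCube n k m := by
  rw [stdCube_eq_pi, closedCube, volume_pi]
  exact MeasureTheory.Measure.pi_Ico_ae_eq_pi_Icc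

lemma stdCube_subset_closedCube (k : ℤ) (m : Fin n → ℤ) :
    stdCube n k m ⊆ closedCube n k m := by
  rw [stdCube_eq_pi]
  exact Set.pi_mono fun i _ => Ico_subset_Icc_self

lemma volume_closedCube (k : ℤ) (m : Fin n → ℤ) :
    volume (closedCube n k m) = ENNReal.ofReal ((2:ℝ) ^ k) ^ n := by
  rw [← measure_congr (stdCube_ae_eq_closedCube k m), volume_stdCube]

lemma avg_closedCube (k : ℤ) (m : Fin n → ℤ) :
    ⨍ y in closedCube n k m, u y ∂volume = cubeAvg n u (stdCube n k m) := by
  rw [setAverage_eq, cubeAvg, measureReal_def, ← measure_congr (stdCube_ae_eq_closedCube k m),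
    ← setIntegral_congr_set (stdCube_ae_eq_closedCube k m), smul_eq_mul]

lemma volume_pi_closedBall (x : Fin n → ℝ) {r : ℝ} (hr : 0 ≤ r) :
    volume (Metric.closedBall x r) = ENNReal.ofReal (2 * r) ^ n := by
  rw [closedBall_pi x hr, volume_pi_pi]
  simp [Real.volume_closedBall]

lemma vitali_h (x : Fin n → ℝ) :
    ∃ᶠ r in nhdsWithin 0 (Set.Ioi 0),
      volume (Metric.closedBall x (3 * r)) ≤ ((6 ^ n : NNReal) : ENNReal) * volume (Metric.closedBall x r) := by
  apply Filter.Eventually.frequently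
  filter_upwards [self_mem_nhdsWithin] with r (hr : 0 < r)
  rw [volume_pi_closedBall x (by positivity), volume_pi_closedBall x hr.le]
  have h1 : (2:ℝ) * (3 * r) = 3 * (2 * r) := by ring
  rw [h1, ENNReal.ofReal_mul (by norm_num : (0:ℝ) ≤ 3), mul_pow]
  have h2 : (ENNReal.ofReal 3) ^ n ≤ ((6 ^ n : NNReal) : ENNReal) := by
    rw [ENNReal.coe_pow]
    refine pow_le_pow_left' ?_ n
    refine le_trans (ENNReal.ofReal_le_ofReal (by norm_num : (3:ℝ) ≤ 6)) ?_
    rw [show ((6:NNReal) : ENNReal) = ENNReal.ofReal 6 by simp]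
  exact mul_le_mul_left h2 _

def czVitali (n : ℕ) : VitaliFamily (volume : Measure (Fin n → ℝ)) :=
  Vitali.vitaliFamily volume (6 ^ n) vitali_h

lemma closedCube_mem_setsAt {k : ℤ} {m : Fin n → ℤ} {x : Fin n → ℝ}
    (hx : x ∈ closedCube n k m) :
    closedCube n k m ∈ (czVitali n).setsAt x := by
  show IsClosed _ ∧ (interior _).Nonempty ∧
    ∃ r, closedCube n k m ⊆ Metric.closedBall x r ∧
      volume (Metric.closedBall x (3 * r)) ≤ ((6 ^ n : NNReal) : ENNReal) * volume (closedCube n k m)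
  have h2p := two_zpow_pos k
  refine ⟨isClosed_set_pi fun i _ => isClosed_Icc, ?_, (2:ℝ) ^ k, ?_, ?_⟩
  · rw [closedCube, interior_pi_set finite_univ]
    rw [Set.univ_pi_nonempty_iff]
    intro i
    rw [interior_Icc]
    exact nonempty_Ioo.2 (by nlinarith)
  · intro y hy
    rw [Metric.mem_closedBall, dist_pi_le_iff h2p.le]
    intro i
    have h1 := hy i (mem_univ i)
    have h2 := hx i (mem_univ i)
    rw [mem_Icc] at h1 h2
    rw [Real.dist_eq, abs_sub_le_iff]
    constructor <;> nlinarith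
  · rw [volume_pi_closedBall x (by positivity), volume_closedCube]
    have h1 : (2:ℝ) * (3 * 2 ^ k) = 6 * 2 ^ k := by ring
    rw [h1, ENNReal.ofReal_mul (by norm_num : (0:ℝ) ≤ 6), mul_pow, ENNReal.coe_pow]
    have h2 : (ENNReal.ofReal 6) ^ n ≤ ((6:NNReal) : ENNReal) ^ n := by
      refine pow_le_pow_left' ?_ n
      rw [show ((6:NNReal) : ENNReal) = ENNReal.ofReal 6 by simp]
    exact mul_le_mul_left h2 _

lemma ae_cz_exists (hn : n ≠ 0) (hint : Integrable u) (hu0 : 0 ≤ u) {lam : ℝ} (hlam : 0 < lam) :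
    ∀ᵐ x ∂(volume : Measure (Fin n → ℝ)),
      lam < u x → ∃ k m, IsCZCube n u lam k m ∧ x ∈ stdCube n k m := by
  filter_upwards [(czVitali n).ae_tendsto_average hint.locallyIntegrable] with x hx hux
  have htendsto : Filter.Tendsto (fun j : ℕ => closedCube n (-j) (idx n (-j) x))
      Filter.atTop ((czVitali n).filterAt x) := by
    rw [VitaliFamily.tendsto_filterAt_iff]
    constructor
    · exact Filter.Eventually.of_forall fun j =>
        closedCube_mem_setsAt (stdCube_subset_closedCube _ _ (mem_stdCube_idx (-j) x))
    · intro ε hε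
      obtain ⟨N, hN⟩ := pow_unbounded_of_one_lt (1 / ε) (by norm_num : (1:ℝ) < 2)
      rw [Filter.eventually_atTop]
      refine ⟨N, fun j hj => ?_⟩
      have hsub : closedCube n (-j) (idx n (-j) x) ⊆ Metric.closedBall x ((2:ℝ) ^ (-j:ℤ)) := by
        intro y hy
        have hmem := stdCube_subset_closedCube (-j) (idx n (-j) x) (mem_stdCube_idx (-j) x)
        have h2p := two_zpow_pos (-j:ℤ)
        rw [Metric.mem_closedBall, dist_pi_le_iff h2p.le]
        intro i
        have h1 := hy i (mem_univ i)
        have h2 := hmem i (mem_univ i)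
        rw [mem_Icc] at h1 h2
        rw [Real.dist_eq, abs_sub_le_iff]
        constructor <;> nlinarith
      refine hsub.trans (Metric.closedBall_subset_closedBall ?_)
      have h1 : (2:ℝ) ^ (-j:ℤ) ≤ 2 ^ (-N:ℤ) :=
        zpow_le_zpow_right₀ (by norm_num : (1:ℝ) ≤ 2) (by omega)
      have h2 : (2:ℝ) ^ (-N:ℤ) ≤ ε := by
        rw [zpow_neg, zpow_natCast]
        have hp : (0:ℝ) < 2 ^ N := by positivity
        have hinv : ε⁻¹ < 2 ^ N := by rw [inv_eq_one_div]; exact hN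
        exact (inv_le_comm₀ hp hε).2 hinv.le
      linarith
  have hconv := hx.comp htendsto
  simp only [Function.comp_def, avg_closedCube] at hconv
  have hev := hconv.eventually (eventually_gt_nhds hux)
  obtain ⟨j, hj⟩ := hev.exists
  exact cz_exists hn hint hu0 hlam (mem_stdCube_idx (-j) x) hj


variable {n : ℕ} {u : (Fin n → ℝ) → ℝ}

lemma badPart_eq_zero {lam : ℝ} {x : Fin n → ℝ}
    (h : ∀ k m, IsCZCube n u lam k m → x ∉ stdCube n k m) : badPart n u lam x = 0 := by
  rw [badPart]
  convert tsum_zero with q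
  exact indicator_of_notMem (h q.1.1 q.1.2 q.2) _

lemma badPart_eq (hn : n ≠ 0) {lam : ℝ} {k : ℤ} {m : Fin n → ℤ} {x : Fin n → ℝ}
    (hcz : IsCZCube n u lam k m) (hx : x ∈ stdCube n k m) :
    badPart n u lam x = u x - cubeAvg n u (stdCube n k m) := by
  rw [badPart]
  rw [tsum_eq_single (⟨(k, m), hcz⟩ : {q : ℤ × (Fin n → ℤ) // IsCZCube n u lam q.1 q.2})]
  · exact indicator_of_mem hx _
  · rintro ⟨⟨k', m'⟩, hcz'⟩ hne
    apply indicator_of_notMem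
    intro hx'
    by_cases hs : stdCube n k' m' = stdCube n k m
    · obtain ⟨hk, hm⟩ := stdCube_inj hn hs
      exact hne (by subst hk; subst hm; rfl)
    · exact Set.disjoint_left.1 (cz_disjoint hn hcz' hcz hs) hx' hx

lemma integrable_u (humeas : Measurable u) (hu0 : 0 ≤ u)
    (hubd : ∃ M : ℝ, ∀ x, u x ≤ M) (husupp : HasCompactSupport u) :
    Integrable u (volume : Measure (Fin n → ℝ)) := by
  obtain ⟨M, hM⟩ := hubd
  refine memLp_one_iff_integrable.1 (husupp.memLp_of_bound humeas.aestronglyMeasurable M ?_)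
  filter_upwards with x
  rw [Real.norm_eq_abs, abs_of_nonneg (hu0 x)]
  exact hM x

lemma stdCube_zero (k : ℤ) (m : Fin 0 → ℤ) : stdCube 0 k m = univ := by
  ext x
  simp [stdCube]

lemma badPart_zero_dim (u : (Fin 0 → ℝ) → ℝ) (lam : ℝ) (x : Fin 0 → ℝ) :
    badPart 0 u lam x = 0 := by
  rw [badPart]
  convert tsum_zero with q
  rw [stdCube_zero, indicator_univ]
  have hvol : (volume : Measure (Fin 0 → ℝ)) univ = 1 := by
    rw [volume_pi, Measure.pi_univ]
    simp
  have hint : ∫ y, u y ∂(volume : Measure (Fin 0 → ℝ)) = u x := by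
    rw [MeasureTheory.integral_unique, measureReal_def, hvol]
    simp only [ENNReal.toReal_one, one_smul]
    exact congrArg u (Subsingleton.elim _ _)
  rw [cubeAvg, Measure.restrict_univ, hint, hvol]
  simp



end CZaux

open CZaux

/-- For `a > 2ⁿ` and non-negative `u ∈ L^∞_c`, the consecutive bad parts of the
Calderón–Zygmund decompositions at heights `a^k` satisfy
`|b_k(x) - b_{k+1}(x)| ≤ (1+a) 2ⁿ a^k` almost everywhere. -/
theorem badPart_difference_bound (n : ℕ) (a : ℝ) (ha : (2 : ℝ) ^ n < a)
    (u : (Fin n → ℝ) → ℝ) (hu0 : 0 ≤ u) (humeas : Measurable u)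
    (hubd : ∃ M : ℝ, ∀ x, u x ≤ M) (husupp : HasCompactSupport u) (k : ℤ) :
    ∀ᵐ x ∂volume,
      |badPart n u (a ^ k) x - badPart n u (a ^ (k + 1)) x| ≤ (1 + a) * 2 ^ n * a ^ k := by
  have h2n1 : (1:ℝ) ≤ 2 ^ n := one_le_pow₀ (by norm_num)
  have ha1 : (1:ℝ) < a := lt_of_le_of_lt h2n1 ha
  have ha0 : (0:ℝ) < a := by linarith
  have hak : (0:ℝ) < a ^ k := zpow_pos ha0 k
  have hakk : a ^ (k + 1) = a * a ^ k := by
    rw [zpow_add_one₀ (ne_of_gt ha0)]; ring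
  have hak1 : (0:ℝ) < a ^ (k + 1) := zpow_pos ha0 (k + 1)
  have hbound : (0:ℝ) < (1 + a) * 2 ^ n * a ^ k := by positivity
  by_cases hn : n = 0
  · subst hn
    filter_upwards with x
    rw [badPart_zero_dim, badPart_zero_dim]
    simpa using hbound.le
  · have hint : Integrable u := integrable_u humeas hu0 hubd husupp
    have hlt : a ^ k < a ^ (k + 1) := by nlinarith
    have h2n0 : (0:ℝ) ≤ (2:ℝ) ^ n := by positivity
    have hB : (2:ℝ) ^ n * a ^ k ≤ (1 + a) * 2 ^ n * a ^ k := by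
      nlinarith [mul_nonneg (mul_nonneg ha0.le h2n0) hak.le]
    have hC : (2:ℝ) ^ n * a ^ (k + 1) ≤ (1 + a) * 2 ^ n * a ^ k := by
      rw [hakk]
      nlinarith [mul_nonneg h2n0 hak.le]
    have hD : a ^ (k + 1) ≤ (1 + a) * 2 ^ n * a ^ k := by
      rw [hakk]
      nlinarith [mul_nonneg (mul_nonneg ha0.le hak.le) (by linarith : (0:ℝ) ≤ 2 ^ n - 1),
        mul_nonneg h2n0 hak.le]
    filter_upwards [ae_cz_exists hn hint hu0 hak1] with x H
    by_cases h1 : ∃ k1 m1, IsCZCube n u (a ^ k) k1 m1 ∧ x ∈ stdCube n k1 m1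
    · obtain ⟨k1, m1, hcz1, hx1⟩ := h1
      have hb1 := badPart_eq hn hcz1 hx1
      have hc1a : 0 ≤ cubeAvg n u (stdCube n k1 m1) := cubeAvg_nonneg hu0 k1 m1
      have hc1b : cubeAvg n u (stdCube n k1 m1) ≤ 2 ^ n * a ^ k :=
        cz_avg_le hn hint hu0 hcz1
      by_cases h2 : ∃ k2 m2, IsCZCube n u (a ^ (k + 1)) k2 m2 ∧ x ∈ stdCube n k2 m2
      · obtain ⟨k2, m2, hcz2, hx2⟩ := h2
        have hb2 := badPart_eq hn hcz2 hx2
        have hc2a : 0 ≤ cubeAvg n u (stdCube n k2 m2) := cubeAvg_nonneg hu0 k2 m2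
        have hc2b : cubeAvg n u (stdCube n k2 m2) ≤ 2 ^ n * a ^ (k + 1) :=
          cz_avg_le hn hint hu0 hcz2
        rw [hb1, hb2]
        rw [abs_le]
        constructor <;> linarith
      · have hux : u x ≤ a ^ (k + 1) := by
          by_contra hc
          push_neg at hc
          obtain ⟨k2, m2, hcz2, hx2⟩ := H hc
          exact h2 ⟨k2, m2, hcz2, hx2⟩
        have hb2 : badPart n u (a ^ (k + 1)) x = 0 :=
          badPart_eq_zero fun k2 m2 hcz hx2 => h2 ⟨k2, m2, hcz, hx2⟩
        rw [hb1, hb2, sub_zero, abs_le]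
        have hux0 : (0:ℝ) ≤ u x := by simpa using hu0 x
        constructor <;> linarith
    · have h2 : ∀ k2 m2, IsCZCube n u (a ^ (k + 1)) k2 m2 → x ∉ stdCube n k2 m2 := by
        intro k2 m2 hcz hx2
        have hlt2 : a ^ k < cubeAvg n u (stdCube n k2 m2) := lt_trans hlt hcz.1
        obtain ⟨k3, m3, hcz3, hx3⟩ := cz_exists hn hint hu0 hak hx2 hlt2
        exact h1 ⟨k3, m3, hcz3, hx3⟩
      have h1' : ∀ k1 m1, IsCZCube n u (a ^ k) k1 m1 → x ∉ stdCube n k1 m1 := by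
        intro k1 m1 hcz hx1
        exact h1 ⟨k1, m1, hcz, hx1⟩
      rw [badPart_eq_zero h1', badPart_eq_zero h2]
      simpa using hbound.le
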